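/- Let C be a disjoint (cardinality-coherent) sunflower flag code of type (t_1,…,t_r) on 𝔽_q^n with center (C_1,…,C_r). Then C is coherent, and for every pair of distinct flags F, F' ∈ C attaining d_f(F,F') = d_f(C) one has F_i ∩ F'_i = C_i for all i (i.e., the minimum distance intersection code of C is {(C_1,…,C_r)}). -/

import Mathlib

open Module

/-- The subspace distance between two subspaces of `𝔽_q^n`:
`d_S(U,V) = dim(U+V) - dim(U∩V)`. -/
noncomputable def subDist {K : Type*} [Field K] {n : ℕ}
    (U V : Submodule K (Fin n → K)) : ℕ :=
  finrank K ↥(U ⊔ V) - finrank K ↥(U ⊓ V)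

/-- The flag distance: `d_f(F,F') = Σ_i d_S(F_i, F'_i)`. -/
noncomputable def flagDist {K : Type*} [Field K] {n r : ℕ}
    (F F' : Fin r → Submodule K (Fin n → K)) : ℕ :=
  ∑ i, subDist (F i) (F' i)

/-- `t` is an admissible type vector: `1 ≤ t 1 < t 2 < … < t r < n`. -/
def IsTypeVector {r : ℕ} (n : ℕ) (t : Fin r → ℕ) : Prop :=
  StrictMono t ∧ ∀ i, 1 ≤ t i ∧ t i < n

/-- A flag of type `t` on `𝔽_q^n`: a nested sequence of subspaces with
`dim(F_i) = t_i`. -/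
def IsFlagOfType {K : Type*} [Field K] {n r : ℕ} (t : Fin r → ℕ)
    (F : Fin r → Submodule K (Fin n → K)) : Prop :=
  Monotone F ∧ ∀ i, finrank K ↥(F i) = t i

/-- A flag code of type `t`: a nonempty set of flags of type `t`. -/
def IsFlagCode {K : Type*} [Field K] {n r : ℕ} (t : Fin r → ℕ)
    (C : Set (Fin r → Submodule K (Fin n → K))) : Prop :=
  C.Nonempty ∧ ∀ F ∈ C, IsFlagOfType t F

/-- Minimum (subspace) distance of a set of subspaces; `0` if there is no
pair of distinct elements. -/
noncomputable def minSubDist {K : Type*} [Field K] {n : ℕ}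
    (D : Set (Submodule K (Fin n → K))) : ℕ :=
  sInf {d | ∃ U ∈ D, ∃ V ∈ D, U ≠ V ∧ d = subDist U V}

/-- Minimum (flag) distance of a flag code; `0` if there is no pair of
distinct elements. -/
noncomputable def minFlagDist {K : Type*} [Field K] {n r : ℕ}
    (C : Set (Fin r → Submodule K (Fin n → K))) : ℕ :=
  sInf {d | ∃ F ∈ C, ∃ F' ∈ C, F ≠ F' ∧ d = flagDist F F'}

/-- The `i`-th projected code of a flag code. -/
def projCode {K : Type*} [Field K] {n r : ℕ}
    (C : Set (Fin r → Submodule K (Fin n → K))) (i : Fin r) :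
    Set (Submodule K (Fin n → K)) :=
  (fun F => F i) '' C

/-- A flag code is disjoint (cardinality-coherent) if `|C| = |C_i|` for all `i`. -/
def IsDisjointFlagCode {K : Type*} [Field K] {n r : ℕ}
    (C : Set (Fin r → Submodule K (Fin n → K))) : Prop :=
  ∀ i, (projCode C i).ncard = C.ncard

/-- A flag code is distance-coherent if a pair of distinct flags attains the
minimum distance iff each pair of subspaces attains the minimum distance of
the corresponding projected code. -/
def DistanceCoherent {K : Type*} [Field K] {n r : ℕ}
    (C : Set (Fin r → Submodule K (Fin n → K))) : Prop :=
  ∀ F ∈ C, ∀ F' ∈ C, F ≠ F' →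
    (flagDist F F' = minFlagDist C ↔
      ∀ i, subDist (F i) (F' i) = minSubDist (projCode C i))

/-- A flag code is coherent if it is disjoint and distance-coherent. -/
def CoherentFlagCode {K : Type*} [Field K] {n r : ℕ}
    (C : Set (Fin r → Submodule K (Fin n → K))) : Prop :=
  IsDisjointFlagCode C ∧ DistanceCoherent C

/-- An equidistant flag code: every pair of distinct flags attains the
minimum distance. -/
def EquidistantFlagCode {K : Type*} [Field K] {n r : ℕ}
    (C : Set (Fin r → Submodule K (Fin n → K))) : Prop :=
  ∀ F ∈ C, ∀ F' ∈ C, F ≠ F' → flagDist F F' = minFlagDist C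

/-- An equidistant (constant dimension) subspace code: `d_S(U,V)` takes the
same value for every pair of distinct elements. -/
def EquidistantSubCode {K : Type*} [Field K] {n : ℕ}
    (D : Set (Submodule K (Fin n → K))) : Prop :=
  ∀ U ∈ D, ∀ V ∈ D, U ≠ V → subDist U V = minSubDist D

/-- A projected-equidistant flag code: every projected code is equidistant. -/
def ProjectedEquidistant {K : Type*} [Field K] {n r : ℕ}
    (C : Set (Fin r → Submodule K (Fin n → K))) : Prop :=
  ∀ i, EquidistantSubCode (projCode C i)

/-- A sunflower subspace code of center `W`: `U ∩ V = W` for all pairs of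
distinct elements. -/
def SubSunflower {K : Type*} [Field K] {n : ℕ}
    (D : Set (Submodule K (Fin n → K))) (W : Submodule K (Fin n → K)) : Prop :=
  ∀ U ∈ D, ∀ V ∈ D, U ≠ V → U ⊓ V = W

/-- A sunflower flag code of center `Cc`: `F_i ∩ F'_i = Cc_i` for every pair
of distinct flags and every `i`. -/
def FlagSunflower {K : Type*} [Field K] {n r : ℕ}
    (C : Set (Fin r → Submodule K (Fin n → K)))
    (Cc : Fin r → Submodule K (Fin n → K)) : Prop :=
  ∀ F ∈ C, ∀ F' ∈ C, F ≠ F' → ∀ i, F i ⊓ F' i = Cc i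

theorem stmt10 {K : Type*} [Field K] [Fintype K] {n r : ℕ}
    (t : Fin r → ℕ) (ht : IsTypeVector n t)
    (C : Set (Fin r → Submodule K (Fin n → K))) (hC : IsFlagCode t C)
    (hdisj : IsDisjointFlagCode C) (Cc : Fin r → Submodule K (Fin n → K))
    (hsun : FlagSunflower C Cc) :
    CoherentFlagCode C ∧
      ∀ F ∈ C, ∀ F' ∈ C, F ≠ F' → flagDist F F' = minFlagDist C →
        ∀ i, F i ⊓ F' i = Cc i := by
  have hfinSub : Finite (Submodule K (Fin n → K)) :=
    Finite.of_injective (fun U : Submodule K (Fin n → K) => (U : Set (Fin n → K))) SetLike.coe_injective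
  have hfin : C.Finite := Set.toFinite C
  have hinj : ∀ i, Set.InjOn (fun F => F i) C := fun i =>
    Set.injOn_of_ncard_image_eq (hdisj i) hfin
  have hsubd : ∀ F ∈ C, ∀ F' ∈ C, F ≠ F' → ∀ i,
      subDist (F i) (F' i) = 2 * t i - 2 * finrank K (Cc i) := by
    intro F hF F' hF' hne i
    have h1 : finrank K ↥(F i ⊔ F' i) + finrank K ↥(F i ⊓ F' i)
        = finrank K ↥(F i) + finrank K ↥(F' i) :=
      Submodule.finrank_sup_add_finrank_inf_eq _ _
    have hint : F i ⊓ F' i = Cc i := hsun F hF F' hF' hne i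
    have hle : finrank K (Cc i) ≤ finrank K ↥(F i) := by
      rw [← hint]; exact Submodule.finrank_mono inf_le_left
    have hFt := (hC.2 F hF).2 i
    have hF't := (hC.2 F' hF').2 i
    rw [hint, hFt, hF't] at h1
    rw [hFt] at hle
    have h2 : finrank K ↥(F i ⊓ F' i) = finrank K ↥(Cc i) := by rw [hint]
    simp only [subDist]
    omega
  have hflagd : ∀ F ∈ C, ∀ F' ∈ C, F ≠ F' →
      flagDist F F' = ∑ i, (2 * t i - 2 * finrank K (Cc i)) := by
    intro F hF F' hF' hne
    exact Finset.sum_congr rfl fun i _ => hsubd F hF F' hF' hne i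
  have hmin : ∀ F ∈ C, ∀ F' ∈ C, F ≠ F' → minFlagDist C = flagDist F F' := by
    intro F hF F' hF' hne
    apply le_antisymm
    · exact Nat.sInf_le ⟨F, hF, F', hF', hne, rfl⟩
    · refine le_csInf ⟨flagDist F F', F, hF, F', hF', hne, rfl⟩ ?_
      rintro d ⟨G, hG, G', hG', hne', rfl⟩
      rw [hflagd F hF F' hF' hne, hflagd G hG G' hG' hne']
  have hminS : ∀ i, ∀ F ∈ C, ∀ F' ∈ C, F ≠ F' →
      minSubDist (projCode C i) = subDist (F i) (F' i) := by
    intro i F hF F' hF' hne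
    have hne' : F i ≠ F' i := fun h => hne (hinj i hF hF' h)
    apply le_antisymm
    · exact Nat.sInf_le ⟨F i, ⟨F, hF, rfl⟩, F' i, ⟨F', hF', rfl⟩, hne', rfl⟩
    · refine le_csInf ⟨subDist (F i) (F' i), F i, ⟨F, hF, rfl⟩, F' i, ⟨F', hF', rfl⟩, hne', rfl⟩ ?_
      rintro d ⟨U, ⟨G, hG, rfl⟩, V, ⟨G', hG', rfl⟩, hUV, rfl⟩
      have hGG : G ≠ G' := fun h => hUV (by rw [h])
      rw [hsubd F hF F' hF' hne i, hsubd G hG G' hG' hGG i]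
  refine ⟨⟨hdisj, fun F hF F' hF' hne => ?_⟩,
    fun F hF F' hF' hne _ i => hsun F hF F' hF' hne i⟩
  exact iff_of_true (hmin F hF F' hF' hne).symm
    (fun i => (hminS i F hF F' hF' hne).symm)
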